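/- Let G be a graph of maximum degree α in which at most β vertices have degree at least 3. Then for every set V ⊆ V(G) such that G[V] has γ connected components, the graph G − V has at most f(α,β,γ) more connected components than G, for some function f depending only on α, β, γ. Concretely, G − V has at most O(γ · α^{O(β)}) more connected components than G. -/

import Mathlib

open Finset SimpleGraph

variable {W : Type} {H : SimpleGraph W}

lemma exists_parent {r v : W} (hne : v ≠ r) (hr : H.Reachable v r) :
    ∃ u, H.Adj v u ∧ H.dist u r + 1 = H.dist v r := by
  obtain ⟨p, hp⟩ := hr.exists_walk_length_eq_dist
  cases p with
  | nil => exact absurd rfl hne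
  | @cons _ x _ h q =>
    refine ⟨x, h, ?_⟩
    have hxr : H.Reachable x r := ⟨q⟩
    have h1 : H.dist x r ≤ q.length := H.dist_le q
    obtain ⟨q', hq'⟩ := hxr.exists_walk_length_eq_dist
    have h2 : H.dist v r ≤ H.dist x r + 1 := by
      have := H.dist_le (SimpleGraph.Walk.cons h q')
      simpa [hq'] using this
    simp only [SimpleGraph.Walk.length_cons] at hp
    omega

lemma comp_degree_sum [Fintype W] [DecidableEq W] [DecidableRel H.Adj]
    [DecidableEq H.ConnectedComponent]
    (c : H.ConnectedComponent) :
    2 * (univ.filter fun v => H.connectedComponentMk v = c).card ≤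
      (∑ v ∈ univ.filter (fun v => H.connectedComponentMk v = c), H.degree v) + 2 := by
  classical
  obtain ⟨r, hr⟩ := c.exists_rep
  have hr' : H.connectedComponentMk r = c := hr
  set F : Finset W := univ.filter fun v => H.connectedComponentMk v = c with hF
  have hparent : ∀ v, v ∈ F → v ≠ r → ∃ u, H.Adj v u ∧ H.dist u r + 1 = H.dist v r := by
    intro v hv hne
    have hv' : H.connectedComponentMk v = c := (mem_filter.mp hv).2
    exact exists_parent hne (ConnectedComponent.exact (hv'.trans hr'.symm))
  choose! P hP1 hP2 using hparent
  have hrF : r ∈ F := mem_filter.mpr ⟨mem_univ _, hr'⟩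
  have hcard : ((F.erase r) ×ˢ (univ : Finset Bool)).card ≤
      (F.sigma fun v => H.neighborFinset v).card := by
    apply Finset.card_le_card_of_injOn
      (fun p => if p.2 then ⟨p.1, P p.1⟩ else ⟨P p.1, p.1⟩)
    · rintro ⟨v, b⟩ hmem
      rw [mem_coe, mem_product] at hmem
      obtain ⟨hv, -⟩ := hmem
      have hvne : v ≠ r := (mem_erase.mp hv).1
      have hvF : v ∈ F := (mem_erase.mp hv).2
      have hadj : H.Adj v (P v) := hP1 v hvF hvne
      have hPvF : P v ∈ F := by
        rw [hF, mem_filter]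
        refine ⟨mem_univ _, ?_⟩
        rw [← (mem_filter.mp hvF).2]
        exact (ConnectedComponent.connectedComponentMk_eq_of_adj hadj).symm
      cases b
      · simp only [if_neg Bool.false_ne_true, mem_coe, mem_sigma]
        exact ⟨hPvF, (mem_neighborFinset _ _ _).mpr hadj.symm⟩
      · simp only [if_pos rfl, mem_coe, mem_sigma]
        exact ⟨hvF, (mem_neighborFinset _ _ _).mpr hadj⟩
    · rintro ⟨v, b⟩ hv ⟨w, b'⟩ hw heq
      rw [mem_coe, mem_product] at hv hw
      have hvne : v ≠ r := (mem_erase.mp hv.1).1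
      have hvF : v ∈ F := (mem_erase.mp hv.1).2
      have hwne : w ≠ r := (mem_erase.mp hw.1).1
      have hwF : w ∈ F := (mem_erase.mp hw.1).2
      have dv := hP2 v hvF hvne
      have dw := hP2 w hwF hwne
      cases b <;> cases b' <;> simp only [Bool.false_eq_true, if_false, if_true,
          Sigma.mk.inj_iff, heq_eq_eq] at heq
      · obtain ⟨h1, h2⟩ := heq; simp [h2]
      · exfalso; obtain ⟨h1, h2⟩ := heq; rw [h1] at dv; rw [← h2] at dw; omega
      · exfalso; obtain ⟨h1, h2⟩ := heq; rw [h2] at dv; rw [← h1] at dw; omega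
      · obtain ⟨h1, h2⟩ := heq; simp [h1]
  rw [Finset.card_product, Finset.card_erase_of_mem hrF, Finset.card_sigma] at hcard
  have hdeg : ∀ v ∈ F, (H.neighborFinset v).card = H.degree v := fun v _ => rfl
  rw [Finset.sum_congr rfl hdeg] at hcard
  have hpos : 0 < F.card := card_pos.mpr ⟨r, hrF⟩
  rw [Finset.card_univ, Fintype.card_bool] at hcard
  omega

lemma walk_closed {V : Type} (G : SimpleGraph V) (X : Set V) {a b : V} (p : G.Walk a b)
    (ha : a ∈ Xᶜ)
    (hcl : ∀ u : ↥Xᶜ, (G.induce Xᶜ).Reachable ⟨a, ha⟩ u → ∀ v ∈ X, ¬G.Adj ↑u v) :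
    ∃ hb : b ∈ Xᶜ, (G.induce Xᶜ).Reachable ⟨a, ha⟩ ⟨b, hb⟩ := by
  induction p with
  | nil => exact ⟨ha, Reachable.refl _⟩
  | @cons a x b h q ih =>
    have hx : x ∈ Xᶜ := by
      by_contra hxX
      exact hcl ⟨a, ha⟩ (Reachable.refl _) x (Set.notMem_compl_iff.mp hxX) h
    have hax : (G.induce Xᶜ).Adj ⟨a, ha⟩ ⟨x, hx⟩ := h
    obtain ⟨hb, hrb⟩ := ih hx (fun u hu v hv => hcl u (hax.reachable.trans hu) v hv)
    exact ⟨hb, hax.reachable.trans hrb⟩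

lemma card_comp_le {V : Type} [Fintype V] (G : SimpleGraph V) (X : Set V) :
    Nat.card (G.induce Xᶜ).ConnectedComponent ≤
      Nat.card G.ConnectedComponent + {u : ↥Xᶜ | ∃ v ∈ X, G.Adj ↑u v}.ncard := by
  classical
  set Gc := G.induce Xᶜ with hGc
  set Sc : Gc.ConnectedComponent → Prop :=
    fun c => ∃ u : ↥Xᶜ, Gc.connectedComponentMk u = c ∧ ∃ v ∈ X, G.Adj ↑u v with hSc
  haveI : Fintype Gc.ConnectedComponent := Fintype.ofFinite _
  haveI : Fintype G.ConnectedComponent := Fintype.ofFinite _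
  have h1 : Fintype.card {c // ¬ Sc c} = Fintype.card Gc.ConnectedComponent
      - Fintype.card {c // Sc c} := Fintype.card_subtype_compl _
  have hle : Fintype.card {c // Sc c} ≤ Fintype.card Gc.ConnectedComponent :=
    Fintype.card_subtype_le _
  -- bound on S-components
  have h2 : Fintype.card {c // Sc c} ≤ {u : ↥Xᶜ | ∃ v ∈ X, G.Adj ↑u v}.ncard := by
    rw [← Nat.card_coe_set_eq, Nat.card_eq_fintype_card]
    apply Fintype.card_le_of_injective
      (fun c => (⟨c.2.choose, c.2.choose_spec.2⟩ : {u : ↥Xᶜ | ∃ v ∈ X, G.Adj ↑u v}))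
    intro c d h
    have hc := c.2.choose_spec.1
    have hd := d.2.choose_spec.1
    have : c.2.choose = d.2.choose := congrArg Subtype.val h
    apply Subtype.ext
    rw [← hc, ← hd, this]
  -- bound on non-S components
  have h3 : Fintype.card {c // ¬ Sc c} ≤ Fintype.card G.ConnectedComponent := by
    apply Fintype.card_le_of_injective
      (fun c => G.connectedComponentMk ↑(c.1.out))
    intro c d h
    obtain ⟨p⟩ : G.Reachable ↑(c.1.out) ↑(d.1.out) := ConnectedComponent.exact h
    have hclos : ∀ u : ↥Xᶜ, Gc.Reachable ⟨↑(c.1.out), (c.1.out).2⟩ u →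
        ∀ v ∈ X, ¬G.Adj ↑u v := by
      intro u hu v hv hadj
      apply c.2
      refine ⟨u, ?_, v, hv, hadj⟩
      have h1 : Gc.connectedComponentMk c.1.out = c.1 := c.1.out_eq
      have h2 : Gc.connectedComponentMk ⟨↑(c.1.out), (c.1.out).2⟩
          = Gc.connectedComponentMk u := ConnectedComponent.sound hu
      rw [Subtype.coe_eta, h1] at h2
      exact h2.symm
    obtain ⟨hb, hrb⟩ := walk_closed G X p (c.1.out).2 hclos
    apply Subtype.ext
    have hc1 : Gc.connectedComponentMk c.1.out = c.1 := c.1.out_eq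
    have hd1 : Gc.connectedComponentMk d.1.out = d.1 := d.1.out_eq
    rw [← hc1, ← hd1]
    have := ConnectedComponent.sound hrb
    rwa [Subtype.coe_eta, (by apply Subtype.ext; rfl :
      (⟨↑(d.1.out), hb⟩ : ↥Xᶜ) = d.1.out)] at this
  have htot : Nat.card Gc.ConnectedComponent =
      Fintype.card {c // Sc c} + Fintype.card {c // ¬ Sc c} := by
    rw [Nat.card_eq_fintype_card]
    omega
  rw [htot, Nat.card_eq_fintype_card]
  omega

lemma boundary_count {V : Type} [Fintype V] (G : SimpleGraph V) [DecidableRel G.Adj]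
    (X : Set V) (α β : ℕ)
    (hdeg : ∀ v, G.degree v ≤ α)
    (hβ : (univ.filter fun v => 3 ≤ G.degree v).card ≤ β) :
    {u : ↥Xᶜ | ∃ v ∈ X, G.Adj ↑u v}.ncard ≤
      2 * Nat.card (G.induce X).ConnectedComponent + 2 * α * β := by
  classical
  by_cases hX : X.Nonempty
  swap
  · have : {u : ↥Xᶜ | ∃ v ∈ X, G.Adj ↑u v} = ∅ := by
      ext u; simp only [Set.mem_setOf_eq, Set.mem_empty_iff_false, iff_false]
      rintro ⟨v, hv, -⟩; exact hX ⟨v, hv⟩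
    rw [this, Set.ncard_empty]
    exact Nat.zero_le _
  haveI : Nonempty ↥X := hX.to_subtype
  set Gx := G.induce X with hGx
  haveI : Fintype Gx.ConnectedComponent := Fintype.ofFinite _
  haveI : DecidableRel Gx.Adj := fun a b => ‹DecidableRel G.Adj› ↑a ↑b
  set dout : ↥X → ℕ := fun v => (univ.filter fun u : ↥Xᶜ => G.Adj ↑v ↑u).card with hdout
  -- step 1 : the boundary set injects into the sigma-type of boundary pairs
  have step1 : {u : ↥Xᶜ | ∃ v ∈ X, G.Adj ↑u v}.ncard ≤ ∑ v : ↥X, dout v := by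
    rw [← Nat.card_coe_set_eq, Nat.card_eq_fintype_card, Fintype.card_subtype,
      ← Finset.card_sigma]
    apply Finset.card_le_card_of_injOn
      (f := fun u : ↥Xᶜ => if h : ∃ v ∈ X, G.Adj ↑u v
        then (⟨⟨h.choose, h.choose_spec.1⟩, u⟩ : Σ _ : ↥X, ↥Xᶜ)
        else ⟨Classical.arbitrary _, u⟩)
    · intro u hu
      rw [mem_coe, mem_filter] at hu
      have hu2 : ∃ v ∈ X, G.Adj (↑u) v := hu.2
      rw [mem_coe]
      beta_reduce
      rw [dif_pos hu2, mem_sigma]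
      refine ⟨mem_univ _, ?_⟩
      rw [mem_filter]
      exact ⟨mem_univ _, hu2.choose_spec.2.symm⟩
    · intro u hu u' hu' h
      rw [mem_coe, mem_filter] at hu hu'
      have hu2 : ∃ v ∈ X, G.Adj (↑u) v := hu.2
      have hu2' : ∃ v ∈ X, G.Adj (↑u') v := hu'.2
      simp only at h
      rw [dif_pos hu2, dif_pos hu2'] at h
      have := congrArg (fun p : (Σ _ : ↥X, ↥Xᶜ) => p.2) h
      simpa using this
  -- fiberwise decomposition
  have step3 : ∑ v : ↥X, dout v =
      ∑ c : Gx.ConnectedComponent,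
        ∑ v ∈ univ.filter fun v => Gx.connectedComponentMk v = c, dout v :=
    (Finset.sum_fiberwise_of_maps_to (fun i _ => mem_univ (Gx.connectedComponentMk i))
      dout).symm
  -- degree splitting
  have hsplit : ∀ v : ↥X, Gx.degree v + dout v = G.degree ↑v := by
    intro v
    have e1 : ((G.neighborFinset ↑v).filter fun w => w ∈ X).card = Gx.degree v := by
      show _ = (Gx.neighborFinset v).card
      apply Finset.card_bij (fun w hw => (⟨w, (mem_filter.mp hw).2⟩ : ↥X))
      · intro w hw
        rw [mem_filter] at hw
        exact (Gx.mem_neighborFinset v _).mpr ((G.mem_neighborFinset _ _).mp hw.1)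
      · intro w hw w' hw' hww
        exact congrArg Subtype.val hww
      · intro w hw
        have : G.Adj ↑v ↑w := (Gx.mem_neighborFinset v w).mp hw
        refine ⟨↑w, ?_, Subtype.ext rfl⟩
        rw [mem_filter]
        exact ⟨(G.mem_neighborFinset _ _).mpr this, w.2⟩
    have e2 : ((G.neighborFinset ↑v).filter fun w => ¬ w ∈ X).card = dout v := by
      rw [hdout]
      apply Finset.card_bij (fun w hw => (⟨w, (mem_filter.mp hw).2⟩ : ↥Xᶜ))
      · intro w hw
        rw [mem_filter] at hw
        rw [mem_filter]
        exact ⟨mem_univ _, (G.mem_neighborFinset _ _).mp hw.1⟩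
      · intro w hw w' hw' hww
        exact congrArg Subtype.val hww
      · intro w hw
        rw [mem_filter] at hw
        refine ⟨↑w, ?_, Subtype.ext rfl⟩
        rw [mem_filter]
        exact ⟨(G.mem_neighborFinset _ _).mpr hw.2, w.2⟩
    rw [← e1, ← e2, SimpleGraph.degree]
    exact Finset.card_filter_add_card_filter_not _
  -- per-component bound
  have step4 : ∀ c : Gx.ConnectedComponent,
      ∑ v ∈ univ.filter (fun v => Gx.connectedComponentMk v = c), dout v ≤
        2 + 2 * (((univ.filter fun v : ↥X => 3 ≤ G.degree ↑v).filter
          fun v => Gx.connectedComponentMk v = c).card * α) := by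
    intro c
    set Fc : Finset ↥X := univ.filter fun v => Gx.connectedComponentMk v = c with hFc
    set Hi : Finset ↥X := Fc.filter fun v => 3 ≤ G.degree ↑v with hHi
    set Lo : Finset ↥X := Fc.filter fun v => ¬ 3 ≤ G.degree ↑v with hLo
    have hcards : Hi.card + Lo.card = Fc.card :=
      Finset.card_filter_add_card_filter_not _
    have hdsum : 2 * Fc.card ≤ (∑ v ∈ Fc, Gx.degree v) + 2 := comp_degree_sum c
    have hdin_split : ∑ v ∈ Fc, Gx.degree v = (∑ v ∈ Hi, Gx.degree v) + ∑ v ∈ Lo, Gx.degree v :=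
      (Finset.sum_filter_add_sum_filter_not _ _ _).symm
    have hdout_split : ∑ v ∈ Fc, dout v = (∑ v ∈ Hi, dout v) + ∑ v ∈ Lo, dout v :=
      (Finset.sum_filter_add_sum_filter_not _ _ _).symm
    have hHi1 : ∑ v ∈ Hi, dout v ≤ Hi.card * α := by
      calc ∑ v ∈ Hi, dout v ≤ ∑ _v ∈ Hi, α :=
            Finset.sum_le_sum (fun v _ => by have := hsplit v; have := hdeg ↑v; omega)
        _ = Hi.card * α := by rw [Finset.sum_const, smul_eq_mul]
    have hHi2 : ∑ v ∈ Hi, Gx.degree v ≤ Hi.card * α := by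
      calc ∑ v ∈ Hi, Gx.degree v ≤ ∑ _v ∈ Hi, α :=
            Finset.sum_le_sum (fun v _ => by have := hsplit v; have := hdeg ↑v; omega)
        _ = Hi.card * α := by rw [Finset.sum_const, smul_eq_mul]
    have hLo1 : (∑ v ∈ Lo, dout v) + ∑ v ∈ Lo, Gx.degree v ≤ Lo.card * 2 := by
      calc (∑ v ∈ Lo, dout v) + ∑ v ∈ Lo, Gx.degree v
          = ∑ v ∈ Lo, (dout v + Gx.degree v) := Finset.sum_add_distrib.symm
        _ ≤ ∑ _v ∈ Lo, 2 := Finset.sum_le_sum (fun v hv => by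
            rw [hLo, mem_filter] at hv
            have := hsplit v
            omega)
        _ = Lo.card * 2 := by rw [Finset.sum_const, smul_eq_mul]
    have hHieq : Hi = (univ.filter fun v : ↥X => 3 ≤ G.degree ↑v).filter
        fun v => Gx.connectedComponentMk v = c := by
      rw [hHi, hFc, Finset.filter_filter, Finset.filter_filter]
      apply Finset.filter_congr
      intro v _
      tauto
    rw [← hHieq]
    omega
  -- sum up
  have step5 : ∑ c : Gx.ConnectedComponent,
      ((univ.filter fun v : ↥X => 3 ≤ G.degree ↑v).filter
        fun v => Gx.connectedComponentMk v = c).card =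
      (univ.filter fun v : ↥X => 3 ≤ G.degree ↑v).card :=
    (Finset.card_eq_sum_card_fiberwise
      (fun v _ => mem_univ (Gx.connectedComponentMk v))).symm
  have step6 : (univ.filter fun v : ↥X => 3 ≤ G.degree ↑v).card ≤ β := by
    refine le_trans ?_ hβ
    apply Finset.card_le_card_of_injOn (fun v => ↑v)
    · intro v hv
      rw [mem_coe, mem_filter] at hv
      rw [mem_coe, mem_filter]
      exact ⟨mem_univ _, hv.2⟩
    · intro v _ w _ h
      exact Subtype.ext h
  calc {u : ↥Xᶜ | ∃ v ∈ X, G.Adj ↑u v}.ncard ≤ ∑ v : ↥X, dout v := step1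
    _ = ∑ c : Gx.ConnectedComponent,
          ∑ v ∈ univ.filter fun v => Gx.connectedComponentMk v = c, dout v := step3
    _ ≤ ∑ c : Gx.ConnectedComponent,
        (2 + 2 * (((univ.filter fun v : ↥X => 3 ≤ G.degree ↑v).filter
          fun v => Gx.connectedComponentMk v = c).card * α)) :=
        Finset.sum_le_sum (fun c _ => step4 c)
    _ = 2 * Fintype.card Gx.ConnectedComponent +
        2 * ((univ.filter fun v : ↥X => 3 ≤ G.degree ↑v).card * α) := by
        rw [Finset.sum_add_distrib, Finset.sum_const, ← Finset.mul_sum,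
          ← Finset.sum_mul, step5]
        simp [mul_comm, Finset.card_univ]
    _ ≤ 2 * Nat.card Gx.ConnectedComponent + 2 * α * β := by
        rw [Nat.card_eq_fintype_card]
        have h1 : (univ.filter fun v : ↥X => 3 ≤ G.degree ↑v).card * α ≤ β * α :=
          Nat.mul_le_mul_right _ step6
        have h2 : 2 * α * β = 2 * (β * α) := by ring
        omega

lemma low_degree_case {V : Type} [Fintype V] (G : SimpleGraph V) [DecidableRel G.Adj]
    (hdeg : ∀ v, G.degree v ≤ 1) (X : Set V) :
    Nat.card (G.induce Xᶜ).ConnectedComponent ≤ Nat.card G.ConnectedComponent := by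
  classical
  have key : ∀ a b : V, (p : G.Walk a b) → a = b ∨ G.Adj a b := by
    intro a b p
    induction p with
    | nil => exact Or.inl rfl
    | @cons a x b h q ih =>
      rcases ih with rfl | hxb
      · exact Or.inr h
      · left
        have h1 : a ∈ G.neighborFinset x := (G.mem_neighborFinset _ _).mpr h.symm
        have h2 : b ∈ G.neighborFinset x := (G.mem_neighborFinset _ _).mpr hxb
        exact Finset.card_le_one.mp (hdeg x) a h1 b h2
  set Gc := G.induce Xᶜ with hGc
  apply Nat.card_le_card_of_injective (fun c : Gc.ConnectedComponent =>
    G.connectedComponentMk ↑(c.out))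
  intro c d h
  obtain ⟨p⟩ : G.Reachable ↑(c.out) ↑(d.out) := ConnectedComponent.exact h
  rcases key _ _ p with heq | hadj
  · rw [← c.out_eq, ← d.out_eq, Subtype.ext heq]
  · have : Gc.Adj c.out d.out := hadj
    rw [← c.out_eq, ← d.out_eq]
    exact ConnectedComponent.sound this.reachable

lemma arith_bound {α β γ : ℕ} (hα : 2 ≤ α) (hγ : 1 ≤ γ) :
    2 * γ + 2 * α * β ≤ 2 * γ * α ^ (2 * (β + 1)) := by
  have h1 : 1 + α * β ≤ α ^ (β + 2) := by
    induction β with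
    | zero =>
      simp only [Nat.mul_zero, pow_succ, pow_one]
      calc 1 + α * 0 = 1 := by ring
        _ ≤ α ^ 2 := Nat.one_le_pow _ _ (by omega)
        _ = α ^ (0 + 2) := by ring
    | succ n ih =>
      have hpow : α ^ (n + 2) + α ≤ α ^ (n + 3) := by
        have : α ^ (n + 3) = α * α ^ (n + 2) := by ring
        have hge : α ^ (n + 2) ≥ α := by
          calc α = α ^ 1 := (pow_one α).symm
            _ ≤ α ^ (n + 2) := Nat.pow_le_pow_right (by omega) (by omega)
        nlinarith
      calc 1 + α * (n + 1) = (1 + α * n) + α := by ring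
        _ ≤ α ^ (n + 2) + α := by omega
        _ ≤ α ^ (n + 3) := hpow
  have h2 : α ^ (β + 2) ≤ α ^ (2 * (β + 1)) :=
    Nat.pow_le_pow_right (by omega) (by omega)
  calc 2 * γ + 2 * α * β = 2 * (γ + α * β) := by ring
    _ ≤ 2 * (γ * (1 + α * β)) := by
        have h3 : α * β ≤ γ * (α * β) := Nat.le_mul_of_pos_left _ (by omega)
        nlinarith
    _ ≤ 2 * (γ * α ^ (β + 2)) := by
        have := Nat.mul_le_mul_left γ h1
        omega
    _ ≤ 2 * γ * α ^ (2 * (β + 1)) := by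
        have := Nat.mul_le_mul_left γ h2
        calc 2 * (γ * α ^ (β + 2)) = 2 * γ * α ^ (β + 2) := by ring
          _ ≤ 2 * γ * α ^ (2 * (β + 1)) :=
            Nat.mul_le_mul_left _ h2

/-- Let `G` be a (finite) graph of maximum degree `α` in which at most `β`
vertices have degree at least `3`.  Then for every vertex set `X` such that `G[X]` has `γ`
connected components, the graph `G − X` has at most `f(α,β,γ)` more connected components
than `G`, for a function `f` depending only on `α, β, γ`; concretely one can take
`f(α,β,γ) = C · γ · α^{C·(β+1)}` for an absolute constant `C`. -/
theorem components_increase_bounded :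
    ∃ (f : ℕ → ℕ → ℕ → ℕ) (C : ℕ),
      ∀ (V : Type) (_ : Fintype V) (G : SimpleGraph V) (α β γ : ℕ),
        (∀ v : V, (G.neighborSet v).ncard ≤ α) →
        ({v : V | 3 ≤ (G.neighborSet v).ncard}.ncard ≤ β) →
        ∀ X : Set V, Nat.card ((G.induce X).ConnectedComponent) = γ →
          Nat.card ((G.induce Xᶜ).ConnectedComponent) ≤
              Nat.card G.ConnectedComponent + f α β γ ∧
            f α β γ ≤ C * γ * α ^ (C * (β + 1)) := by
  classical
  refine ⟨fun α β γ => if 2 ≤ α ∧ 1 ≤ γ then 2 * γ + 2 * α * β else 0, 2, ?_⟩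
  intro V instV G α β γ hdegα hβ X hγ
  haveI : DecidableRel G.Adj := Classical.decRel _
  have hncard : ∀ v, (G.neighborSet v).ncard = G.degree v := by
    intro v
    rw [← Nat.card_coe_set_eq, Nat.card_eq_fintype_card, card_neighborSet_eq_degree]
  have hdeg : ∀ v, G.degree v ≤ α := fun v => by rw [← hncard]; exact hdegα v
  have hβ' : (univ.filter fun v => 3 ≤ G.degree v).card ≤ β := by
    have hs : {v : V | 3 ≤ (G.neighborSet v).ncard} = {v : V | 3 ≤ G.degree v} := by
      ext v; simp [hncard]
    calc (univ.filter fun v => 3 ≤ G.degree v).card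
        = Fintype.card {v : V // 3 ≤ G.degree v} := (Fintype.card_subtype _).symm
      _ = Nat.card {v : V // 3 ≤ G.degree v} := (Nat.card_eq_fintype_card).symm
      _ = {v : V | 3 ≤ G.degree v}.ncard := Nat.card_coe_set_eq _
      _ ≤ β := by rw [← hs]; exact hβ
  by_cases hc : 2 ≤ α ∧ 1 ≤ γ
  · simp only [if_pos hc]
    constructor
    · calc Nat.card (G.induce Xᶜ).ConnectedComponent
          ≤ Nat.card G.ConnectedComponent + {u : ↥Xᶜ | ∃ v ∈ X, G.Adj ↑u v}.ncard :=
            card_comp_le G X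
        _ ≤ Nat.card G.ConnectedComponent +
              (2 * Nat.card (G.induce X).ConnectedComponent + 2 * α * β) := by
            have := boundary_count G X α β hdeg hβ'
            omega
        _ = Nat.card G.ConnectedComponent + (2 * γ + 2 * α * β) := by rw [hγ]
    · exact arith_bound hc.1 hc.2
  · simp only [if_neg hc]
    refine ⟨?_, Nat.zero_le _⟩
    rw [Nat.add_zero]
    rcases Decidable.not_and_iff_or_not.mp hc with hα | hγ1
    · -- max degree ≤ 1
      exact low_degree_case G (fun v => by have := hdeg v; omega) X
    · -- γ = 0, so X is empty
      have hX : X = ∅ := by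
        by_contra hne
        obtain ⟨x, hx⟩ := Set.nonempty_iff_ne_empty.mpr hne
        haveI : Nonempty ↥X := ⟨⟨x, hx⟩⟩
        haveI : Nonempty (G.induce X).ConnectedComponent :=
          ⟨(G.induce X).connectedComponentMk (Classical.arbitrary _)⟩
        have : 0 < Nat.card (G.induce X).ConnectedComponent := Nat.card_pos
        omega
      have hbd : {u : ↥Xᶜ | ∃ v ∈ X, G.Adj ↑u v} = ∅ := by
        ext u
        simp [hX]
      have := card_comp_le G X
      rw [hbd, Set.ncard_empty, Nat.add_zero] at this
      exact this
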